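/- For every m ∈ ℕ, every r ≥ 0 and every t > 0, Σ_{k=0}^{m} (1/k!) ∂_a^k g(r,0,t) = Σ_{j=0}^{m} Σ_{k=0}^{m−j} (1/(j!·k!)) · (d^k/ds^k [φ₁(s)^j])|_{s=0} · (−tr²)^j · r^{2(j+k)} · e^{−tr²}. -/

import Mathlib

open scoped ContDiff
open Finset

private lemma le_infty (n : ℕ) : (n : WithTop ℕ∞) ≤ ∞ := by exact_mod_cast le_top

private lemma idw_eq {n : ℕ} {f : ℝ → ℝ} {U : Set ℝ} (hU : IsOpen U) {x : ℝ} (hx : x ∈ U) :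
    iteratedDerivWithin n f U x = iteratedDeriv n f x := by
  rw [iteratedDerivWithin_eq_iteratedFDerivWithin, iteratedFDerivWithin_of_isOpen n hU hx,
    iteratedDeriv_eq_iteratedFDeriv]

private lemma iD_congr {n : ℕ} {f g : ℝ → ℝ} {U : Set ℝ} (hU : IsOpen U) {x : ℝ} (hx : x ∈ U)
    (h : Set.EqOn f g U) : iteratedDeriv n f x = iteratedDeriv n g x := by
  refine Filter.EventuallyEq.iteratedDeriv_eq n ?_
  filter_upwards [hU.mem_nhds hx] with a ha using h ha

private lemma iD_add {n : ℕ} {f g : ℝ → ℝ} {U : Set ℝ} (hU : IsOpen U) {x : ℝ} (hx : x ∈ U)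
    (hf : ContDiffOn ℝ ∞ f U) (hg : ContDiffOn ℝ ∞ g U) :
    iteratedDeriv n (fun a => f a + g a) x = iteratedDeriv n f x + iteratedDeriv n g x := by
  rw [← idw_eq hU hx, ← idw_eq (n := n) (f := f) hU hx, ← idw_eq (n := n) (f := g) hU hx]
  exact iteratedDerivWithin_add hx hU.uniqueDiffOn (hf.of_le (le_infty n) x hx) (hg.of_le (le_infty n) x hx)

private lemma iD_cmul {n : ℕ} {f : ℝ → ℝ} (c : ℝ) {U : Set ℝ} (hU : IsOpen U) {x : ℝ}
    (hx : x ∈ U) (hf : ContDiffOn ℝ ∞ f U) :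
    iteratedDeriv n (fun a => c * f a) x = c * iteratedDeriv n f x := by
  rw [← idw_eq hU hx, ← idw_eq (n := n) (f := f) hU hx]
  exact iteratedDerivWithin_const_mul hx hU.uniqueDiffOn c (hf.of_le (le_infty n) x hx)

private lemma iD_sum {n : ℕ} {ι : Type*} (s : Finset ι) (F : ι → ℝ → ℝ) {U : Set ℝ}
    (hU : IsOpen U) {x : ℝ} (hx : x ∈ U) (hF : ∀ i ∈ s, ContDiffOn ℝ ∞ (F i) U) :
    iteratedDeriv n (fun a => ∑ i ∈ s, F i a) x = ∑ i ∈ s, iteratedDeriv n (F i) x := by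
  induction s using Finset.cons_induction with
  | empty =>
    simp only [Finset.sum_empty]
    rw [show (fun _ : ℝ => (0:ℝ)) = fun a => (0:ℝ) * 0 from by funext a; ring,
      iD_cmul 0 hU hx contDiffOn_const]
    ring
  | cons i s his ih =>
    simp only [Finset.sum_cons]
    rw [iD_add hU hx (hF i (Finset.mem_cons_self i s))
      (ContDiffOn.sum fun j hj => hF j (Finset.mem_cons_of_mem hj)),
      ih (fun j hj => hF j (Finset.mem_cons_of_mem hj))]

private lemma iD_const (n : ℕ) (c : ℝ) (x : ℝ) :
    iteratedDeriv n (fun _ : ℝ => c) x = if n = 0 then c else 0 := by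
  induction n with
  | zero => simp
  | succ k ih =>
    rw [iteratedDeriv_succ']
    simp only [deriv_const']
    cases k <;> simp_all [iteratedDeriv_succ', deriv_const']

private lemma iD_X {U : Set ℝ} (hU : IsOpen U) (h0 : (0:ℝ) ∈ U) :
    ∀ (n : ℕ) (ψ : ℝ → ℝ), ContDiffOn ℝ ∞ ψ U →
      iteratedDeriv n (fun a => a * ψ a) 0 = n * iteratedDeriv (n - 1) ψ 0 := by
  intro n
  induction n with
  | zero => intro ψ _; simp
  | succ k ih =>
    intro ψ hψ
    have hψ' : ContDiffOn ℝ ∞ (deriv ψ) U := hψ.deriv_of_isOpen hU (by simp)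
    have heq : Set.EqOn (deriv fun a => a * ψ a) (fun a => ψ a + a * deriv ψ a) U := by
      intro a ha
      have hd : HasDerivAt ψ (deriv ψ a) a :=
        ((hψ.contDiffAt (hU.mem_nhds ha)).differentiableAt (by simp)).hasDerivAt
      exact ((hasDerivAt_id a).mul hd).deriv.trans (by simp only [id_eq]; ring)
    rw [iteratedDeriv_succ', iD_congr hU h0 heq,
      iD_add hU h0 hψ
        (by exact contDiffOn_id.mul hψ' : ContDiffOn ℝ ∞ (fun a : ℝ => a * deriv ψ a) U),
      ih (deriv ψ) hψ']
    rcases Nat.eq_zero_or_pos k with hk | hk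
    · subst hk; simp
    · have h1 : iteratedDeriv (k - 1) (deriv ψ) 0 = iteratedDeriv k ψ 0 := by
        conv_rhs => rw [show k = (k - 1) + 1 by omega]
        rw [iteratedDeriv_succ']
      rw [h1, show k + 1 - 1 = k from rfl]
      push_cast
      ring

private lemma iD_pow {U : Set ℝ} (hU : IsOpen U) (h0 : (0:ℝ) ∈ U) :
    ∀ (j n : ℕ) (ψ : ℝ → ℝ), ContDiffOn ℝ ∞ ψ U →
      iteratedDeriv n (fun a => a ^ j * ψ a) 0 =
        if j ≤ n then (n.choose j : ℝ) * (j.factorial : ℝ) * iteratedDeriv (n - j) ψ 0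
        else 0 := by
  intro j
  induction j with
  | zero =>
    intro n ψ hψ
    simp
  | succ i ih =>
    intro n ψ hψ
    have hsm : ContDiffOn ℝ ∞ (fun a => a ^ i * ψ a) U :=
      (contDiffOn_id.pow i).mul hψ
    have heq : Set.EqOn (fun a : ℝ => a ^ (i+1) * ψ a) (fun a => a * (a ^ i * ψ a)) U := by
      intro a _; simp; ring
    rw [iD_congr hU h0 heq, iD_X hU h0 n _ hsm]
    cases n with
    | zero => simp
    | succ k =>
      rw [show k + 1 - 1 = k from rfl, ih k ψ hψ]
      by_cases hik : i ≤ k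
      · rw [if_pos hik, if_pos (by omega : i + 1 ≤ k + 1)]
        rw [show k + 1 - (i + 1) = k - i from by omega]
        have hch : (k + 1) * k.choose i = (k+1).choose (i+1) * (i+1) :=
          Nat.add_one_mul_choose_eq k i
        have : ((k:ℝ) + 1) * (k.choose i : ℝ) = ((k+1).choose (i+1) : ℝ) * ((i:ℝ)+1) := by
          exact_mod_cast hch
        push_cast [Nat.factorial_succ]
        linear_combination (iteratedDeriv (k - i) ψ 0 * (i.factorial : ℝ)) * this
      · rw [if_neg hik, if_neg (by omega)]
        push_cast
        ring

private lemma iD_scale {U : Set ℝ} (hU : IsOpen U) (h0 : (0:ℝ) ∈ U) (c : ℝ) :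
    ∀ (n : ℕ) (ψ : ℝ → ℝ), ContDiffOn ℝ ∞ ψ U →
      iteratedDeriv n (fun a => ψ (c * a)) 0 = c ^ n * iteratedDeriv n ψ 0 := by
  have hV : IsOpen ((fun a : ℝ => c * a) ⁻¹' U) :=
    hU.preimage (continuous_const.mul continuous_id)
  have h0V : (0:ℝ) ∈ (fun a : ℝ => c * a) ⁻¹' U := by
    simp only [Set.mem_preimage, mul_zero]; exact h0
  intro n
  induction n with
  | zero => simp
  | succ k ih =>
    intro ψ hψ
    have hψ' : ContDiffOn ℝ ∞ (deriv ψ) U := hψ.deriv_of_isOpen hU (by simp)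
    have hcomp : ContDiffOn ℝ ∞ (fun a => deriv ψ (c * a)) ((fun a : ℝ => c * a) ⁻¹' U) :=
      hψ'.comp (contDiffOn_const.mul contDiffOn_id) (Set.mapsTo_preimage _ _)
    have heq : Set.EqOn (deriv fun a => ψ (c * a)) (fun a => c * deriv ψ (c * a))
        ((fun a : ℝ => c * a) ⁻¹' U) := by
      intro a ha
      have hd : HasDerivAt ψ (deriv ψ (c * a)) (c * a) :=
        ((hψ.contDiffAt (hU.mem_nhds ha)).differentiableAt (by simp)).hasDerivAt
      have hi : HasDerivAt (fun a : ℝ => c * a) c a := by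
        simpa using (hasDerivAt_id a).const_mul c
      have := (hd.comp a hi).deriv
      rw [Function.comp_def] at this
      rw [this]; ring
    rw [iteratedDeriv_succ', iD_congr hV h0V heq, iD_cmul c hV h0V hcomp, ih (deriv ψ) hψ',
      ← iteratedDeriv_succ']
    ring

private lemma sum_pow_shift (x d : ℝ) (m : ℕ) :
    ∑ j ∈ Finset.range (m+1), (↑j * x^(j-1) * d) / (j.factorial : ℝ)
      = (∑ j ∈ Finset.range m, x^j / (j.factorial : ℝ)) * d := by
  rw [Finset.sum_range_succ']
  simp only [Nat.cast_zero, zero_mul, Nat.factorial_zero, Nat.cast_one, zero_div, add_zero]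
  rw [Finset.sum_mul]
  refine Finset.sum_congr rfl fun j _ => ?_
  have h1 : ((j+1 : ℕ) : ℝ) ≠ 0 := by positivity
  have h2 : ((j.factorial : ℝ)) ≠ 0 := by positivity
  rw [Nat.factorial_succ]
  push_cast
  field_simp

private lemma zero_pow_sum (m : ℕ) :
    ∑ j ∈ Finset.range (m+1), ((0:ℝ))^j / (j.factorial : ℝ) = 1 := by
  rw [Finset.sum_range_succ']
  simp

private lemma iD_tail {U : Set ℝ} (hU : IsOpen U) (h0 : (0:ℝ) ∈ U) :
    ∀ (n m : ℕ), n ≤ m → ∀ (u g : ℝ → ℝ), ContDiffOn ℝ ∞ u U → ContDiffOn ℝ ∞ g U →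
      u 0 = 0 →
      iteratedDeriv n (fun a => g a * (Real.exp (u a) -
        ∑ j ∈ Finset.range (m+1), u a ^ j / (j.factorial : ℝ))) 0 = 0 := by
  intro n
  induction n with
  | zero =>
    intro m _ u g hu hg hu0
    rw [iteratedDeriv_zero]
    simp [hu0, Real.exp_zero, zero_pow_sum]
  | succ n ih =>
    intro m hnm u g hu hg hu0
    obtain ⟨m', rfl⟩ : ∃ m', m = m' + 1 := ⟨m - 1, by omega⟩
    have hSm : ∀ M : ℕ, ContDiffOn ℝ ∞
        (fun a => ∑ j ∈ Finset.range (M+1), u a ^ j / (j.factorial : ℝ)) U :=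
      fun M => ContDiffOn.sum fun j _ => (hu.pow j).div_const _
    have hexp : ContDiffOn ℝ ∞ (fun a => Real.exp (u a)) U :=
      Real.contDiff_exp.comp_contDiffOn hu
    have hu' : ContDiffOn ℝ ∞ (deriv u) U := hu.deriv_of_isOpen hU (by simp)
    have hg' : ContDiffOn ℝ ∞ (deriv g) U := hg.deriv_of_isOpen hU (by simp)
    have heq : Set.EqOn
        (deriv fun a => g a * (Real.exp (u a) -
          ∑ j ∈ Finset.range (m'+1+1), u a ^ j / (j.factorial : ℝ)))
        (fun a => deriv g a * (Real.exp (u a) -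
            ∑ j ∈ Finset.range (m'+1+1), u a ^ j / (j.factorial : ℝ)) +
          (g a * deriv u a) * (Real.exp (u a) -
            ∑ j ∈ Finset.range (m'+1), u a ^ j / (j.factorial : ℝ))) U := by
      intro a ha
      have hdu : HasDerivAt u (deriv u a) a :=
        ((hu.contDiffAt (hU.mem_nhds ha)).differentiableAt (by simp)).hasDerivAt
      have hdg : HasDerivAt g (deriv g a) a :=
        ((hg.contDiffAt (hU.mem_nhds ha)).differentiableAt (by simp)).hasDerivAt
      have hde : HasDerivAt (fun a => Real.exp (u a)) (Real.exp (u a) * deriv u a) a := by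
        have := (Real.hasDerivAt_exp (u a)).comp a hdu
        rwa [Function.comp_def] at this
      have hds : HasDerivAt (fun a => ∑ j ∈ Finset.range (m'+1+1), u a ^ j / (j.factorial : ℝ))
          (∑ j ∈ Finset.range (m'+1+1),
            ((j : ℝ) * u a ^ (j-1) * deriv u a) / (j.factorial : ℝ)) a :=
        HasDerivAt.fun_sum fun j _ => (hdu.pow j).div_const _
      have := (hdg.fun_mul (hde.fun_sub hds)).deriv
      rw [this, sum_pow_shift (u a) (deriv u a) (m'+1)]
      ring
    rw [iteratedDeriv_succ', iD_congr hU h0 heq,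
      iD_add hU h0 (hg'.mul (hexp.sub (hSm (m'+1)))) ((hg.mul hu').mul (hexp.sub (hSm m'))),
      ih (m'+1) (by omega) u (deriv g) hu hg' hu0,
      ih m' (by omega) u (fun a => g a * deriv u a) hu (hg.mul hu') hu0]
    ring

private lemma tri (m : ℕ) (f : ℕ → ℕ → ℝ) :
    ∑ k ∈ Finset.range (m+1), ∑ j ∈ Finset.range (k+1), f j (k-j)
      = ∑ j ∈ Finset.range (m+1), ∑ k ∈ Finset.range (m-j+1), f j k := by
  simp only [Finset.range_eq_Ico]
  rw [← Finset.sum_Ico_Ico_comm]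
  refine Finset.sum_congr rfl fun j hj => ?_
  rw [Finset.sum_Ico_eq_sum_range]
  simp only [Finset.mem_Ico] at hj
  rw [show m + 1 - j = m - j + 1 by omega, Finset.range_eq_Ico]
  exact Finset.sum_congr rfl fun k _ => by congr 1; omega

private lemma tri' (m : ℕ) (F : ℕ → ℕ → ℝ) :
    ∑ k ∈ Finset.range (m+1), ∑ j ∈ Finset.range (k+1), F j k
      = ∑ j ∈ Finset.range (m+1), ∑ k ∈ Finset.range (m-j+1), F j (j+k) := by
  rw [← tri m (fun j i => F j (j + i))]
  refine Finset.sum_congr rfl fun k _ => Finset.sum_congr rfl fun j hj => ?_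
  simp only [Finset.mem_range] at hj
  congr 1
  omega

private noncomputable def phi1 : ℝ → ℝ := fun s => ((1/2 + Real.sqrt (1/4 - s)) ^ 2)⁻¹

private noncomputable def wf (t s0 : ℝ) : ℝ → ℝ := fun a => -(t*s0) * s0 * (a * phi1 (s0 * a))

private lemma iD_tail1 {U : Set ℝ} (hU : IsOpen U) (h0 : (0:ℝ) ∈ U) (n m : ℕ) (h : n ≤ m)
    (u : ℝ → ℝ) (hu : ContDiffOn ℝ ∞ u U) (hu0 : u 0 = 0) :
    iteratedDeriv n (fun a => Real.exp (u a) -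
      ∑ j ∈ Finset.range (m+1), u a ^ j / (j.factorial : ℝ)) 0 = 0 := by
  calc iteratedDeriv n (fun a => Real.exp (u a) -
        ∑ j ∈ Finset.range (m+1), u a ^ j / (j.factorial : ℝ)) 0
      = iteratedDeriv n (fun a => (1:ℝ) * (Real.exp (u a) -
          ∑ j ∈ Finset.range (m+1), u a ^ j / (j.factorial : ℝ))) 0 :=
        iD_congr hU h0 (fun a _ => by rw [one_mul])
    _ = 0 := iD_tail hU h0 n m h u (fun _ => 1) hu contDiffOn_const hu0

private lemma iD_const' (n : ℕ) (c x : ℝ) :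
    iteratedDeriv n (fun _ : ℝ => c) x = if n = 0 then c else 0 := by
  induction n with
  | zero => simp
  | succ k ih => cases k <;> simp_all [iteratedDeriv_succ', deriv_const']

private lemma phi1_smooth : ContDiffOn ℝ ∞ phi1 (Set.Ioo (-(1/8) : ℝ) (1/8)) := by
  have hsqrtOn : ContDiffOn ℝ ∞ (fun s : ℝ => Real.sqrt (1/4 - s))
      (Set.Ioo (-(1/8) : ℝ) (1/8)) := by
    intro s hs
    have h14 : (1/4 - s) ≠ 0 := by
      simp only [Set.mem_Ioo] at hs; nlinarith [hs.2]
    exact (ContDiffAt.comp s (Real.contDiffAt_sqrt h14)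
      (contDiffAt_const.sub contDiffAt_id)).contDiffWithinAt
  have h : ContDiffOn ℝ ∞ (fun s : ℝ => ((1/2 + Real.sqrt (1/4 - s)) ^ 2)⁻¹)
      (Set.Ioo (-(1/8) : ℝ) (1/8)) := by
    refine ContDiffOn.inv ((contDiffOn_const.add hsqrtOn).pow 2) ?_
    intro s _
    have h1 : 0 ≤ Real.sqrt (1/4 - s) := Real.sqrt_nonneg _
    positivity
  exact h

/-- main identity on the g-side. -/
private lemma g_eq (t s0 a : ℝ) (h1 : -(1/8) < s0 * a) (h2 : s0 * a < 1/8) :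
    Real.exp (-(2 * t * s0) / (1 + Real.sqrt (1 - 4 * a * s0)))
      = Real.exp (-(t * s0)) * Real.exp (wf t s0 a) := by
  have h14 : 0 < 1/4 - s0 * a := by linarith
  set q := Real.sqrt (1/4 - s0 * a) with hq
  have hqpos : 0 < q := Real.sqrt_pos.mpr h14
  have hq2 : q ^ 2 = 1/4 - s0 * a := Real.sq_sqrt h14.le
  have hsq4 : Real.sqrt (1 - 4 * a * s0) = 2 * q := by
    rw [show 1 - 4 * a * s0 = (2:ℝ)^2 * (1/4 - s0 * a) by ring, Real.sqrt_mul (by positivity),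
      Real.sqrt_sq (by norm_num : (0:ℝ) ≤ 2)]
  rw [← Real.exp_add]
  congr 1
  rw [hsq4, wf, phi1]
  simp only [← hq]
  have hb : (0:ℝ) < 1/2 + q := by linarith
  have hbne : (1/2 + q) ≠ 0 := ne_of_gt hb
  have h2q : (1 + 2*q) ≠ 0 := by positivity
  have key : (1/2 + q)^2 = 1/2 + q - s0 * a := by linear_combination hq2
  have e1 : -(t*s0) + -(t*s0)*s0*(a * ((1/2+q)^2)⁻¹)
      = -(t*s0) * (((1/2+q)^2 + s0*a) / (1/2+q)^2) := by
    field_simp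
    ring
  have e2 : (1/2+q)^2 + s0*a = 1/2+q := by linear_combination key
  rw [e1, e2, pow_two]
  field_simp

private lemma hkey_lemma (t s0 : ℝ) (hs0 : 0 < s0) (m k : ℕ) (hk : k ≤ m) :
    iteratedDeriv k (fun a : ℝ => Real.exp (-(2 * t * s0) / (1 + Real.sqrt (1 - 4 * a * s0)))) 0
      = Real.exp (-(t*s0)) * ∑ j ∈ Finset.range (m+1),
          (-(t*s0)*s0)^j * ((j.factorial : ℝ))⁻¹ *
            (if j ≤ k then ((k.choose j : ℝ)) * (j.factorial : ℝ) *
              (s0^(k-j) * iteratedDeriv (k-j) (fun s => phi1 s ^ j) 0) else 0) := by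
  set U : Set ℝ := Set.Ioo (-(1/8) : ℝ) (1/8) with hUdef
  have hU : IsOpen U := isOpen_Ioo
  have h0U : (0:ℝ) ∈ U := by constructor <;> norm_num
  have hφ : ContDiffOn ℝ ∞ phi1 U := phi1_smooth
  set V : Set ℝ := (fun a : ℝ => s0 * a) ⁻¹' U with hVdef
  have hV : IsOpen V := hU.preimage (continuous_const.mul continuous_id)
  have h0V : (0:ℝ) ∈ V := by
    simp only [hVdef, Set.mem_preimage, mul_zero]
    exact h0U
  have hcomp : ∀ ψ : ℝ → ℝ, ContDiffOn ℝ ∞ ψ U → ContDiffOn ℝ ∞ (fun a => ψ (s0 * a)) V :=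
    fun ψ h => h.comp (contDiffOn_const.mul contDiffOn_id) (Set.mapsTo_preimage _ _)
  have hw : ContDiffOn ℝ ∞ (wf t s0) V := by
    have : ContDiffOn ℝ ∞ (fun a : ℝ => -(t*s0) * s0 * (a * phi1 (s0 * a))) V :=
      contDiffOn_const.mul (contDiffOn_id.mul (hcomp phi1 hφ))
    exact this
  have hw0 : wf t s0 0 = 0 := by simp [wf]
  have hexpw : ContDiffOn ℝ ∞ (fun a => Real.exp (wf t s0 a)) V :=
    Real.contDiff_exp.comp_contDiffOn hw
  have hgG : Set.EqOn (fun a : ℝ => Real.exp (-(2 * t * s0) / (1 + Real.sqrt (1 - 4 * a * s0))))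
      (fun a => Real.exp (-(t*s0)) * Real.exp (wf t s0 a)) V := by
    intro a ha
    have hmem : s0 * a ∈ U := ha
    exact g_eq t s0 a hmem.1 hmem.2
  have hS : ContDiffOn ℝ ∞
      (fun a => ∑ j ∈ Finset.range (m+1), wf t s0 a ^ j / (j.factorial : ℝ)) V :=
    ContDiffOn.sum fun j _ => (hw.pow j).div_const _
  have hterm : ∀ j : ℕ, iteratedDeriv k (fun a => wf t s0 a ^ j / (j.factorial:ℝ)) 0
      = (-(t*s0)*s0)^j * ((j.factorial:ℝ))⁻¹ *
          (if j ≤ k then ((k.choose j:ℝ)) * (j.factorial:ℝ) *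
            (s0^(k-j) * iteratedDeriv (k-j) (fun s => phi1 s ^ j) 0) else 0) := by
    intro j
    have hψ : ContDiffOn ℝ ∞ (fun b : ℝ => phi1 (s0 * b) ^ j) V := (hcomp phi1 hφ).pow j
    have h1 : iteratedDeriv k (fun a => wf t s0 a ^ j / (j.factorial:ℝ)) 0
        = iteratedDeriv k
            (fun a => ((-(t*s0)*s0)^j * ((j.factorial:ℝ))⁻¹) * (a^j * phi1 (s0*a)^j)) 0 :=
      iD_congr hV h0V (fun a _ => by simp only [wf]; ring)
    have h2 : iteratedDeriv k
          (fun a => ((-(t*s0)*s0)^j * ((j.factorial:ℝ))⁻¹) * (a^j * phi1 (s0*a)^j)) 0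
        = ((-(t*s0)*s0)^j * ((j.factorial:ℝ))⁻¹) *
            iteratedDeriv k (fun a => a^j * phi1 (s0*a)^j) 0 :=
      iD_cmul _ hV h0V ((contDiffOn_id.pow j).mul hψ)
    have h3 : iteratedDeriv k (fun a => a^j * phi1 (s0*a)^j) 0
        = if j ≤ k then ((k.choose j:ℝ)) * (j.factorial:ℝ) *
            iteratedDeriv (k-j) (fun b => phi1 (s0*b) ^ j) 0 else 0 :=
      iD_pow hV h0V j k _ hψ
    have h4 : iteratedDeriv (k-j) (fun b => phi1 (s0*b) ^ j) 0
        = s0^(k-j) * iteratedDeriv (k-j) (fun s => phi1 s ^ j) 0 :=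
      iD_scale hU h0U s0 (k-j) (fun s => phi1 s ^ j) (hφ.pow j)
    rw [h1, h2, h3, h4]
  calc iteratedDeriv k
        (fun a : ℝ => Real.exp (-(2 * t * s0) / (1 + Real.sqrt (1 - 4 * a * s0)))) 0
      = iteratedDeriv k (fun a => Real.exp (-(t*s0)) * Real.exp (wf t s0 a)) 0 :=
        iD_congr hV h0V hgG
    _ = Real.exp (-(t*s0)) * iteratedDeriv k (fun a => Real.exp (wf t s0 a)) 0 :=
        iD_cmul _ hV h0V hexpw
    _ = Real.exp (-(t*s0)) * iteratedDeriv k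
          (fun a => (Real.exp (wf t s0 a) -
              ∑ j ∈ Finset.range (m+1), wf t s0 a ^ j / (j.factorial : ℝ)) +
            ∑ j ∈ Finset.range (m+1), wf t s0 a ^ j / (j.factorial : ℝ)) 0 := by
        exact congrArg (fun z => Real.exp (-(t*s0)) * z)
          (iD_congr hV h0V (fun a _ => by ring))
    _ = Real.exp (-(t*s0)) *
          (iteratedDeriv k (fun a => Real.exp (wf t s0 a) -
              ∑ j ∈ Finset.range (m+1), wf t s0 a ^ j / (j.factorial : ℝ)) 0 +
            iteratedDeriv k
              (fun a => ∑ j ∈ Finset.range (m+1), wf t s0 a ^ j / (j.factorial : ℝ)) 0) :=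
        congrArg (fun z => Real.exp (-(t*s0)) * z) (iD_add hV h0V (hexpw.sub hS) hS)
    _ = Real.exp (-(t*s0)) *
          (0 + iteratedDeriv k
              (fun a => ∑ j ∈ Finset.range (m+1), wf t s0 a ^ j / (j.factorial : ℝ)) 0) := by
        rw [iD_tail1 hV h0V k m hk (wf t s0) hw hw0]
    _ = Real.exp (-(t*s0)) *
          (0 + ∑ j ∈ Finset.range (m+1),
            iteratedDeriv k (fun a => wf t s0 a ^ j / (j.factorial : ℝ)) 0) := by
        exact congrArg (fun z => Real.exp (-(t*s0)) * (0 + z))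
          (iD_sum (Finset.range (m+1)) (fun j a => wf t s0 a ^ j / (j.factorial : ℝ)) hV h0V
            (fun j _ => (hw.pow j).div_const _))
    _ = Real.exp (-(t*s0)) * ∑ j ∈ Finset.range (m+1),
          (-(t*s0)*s0)^j * ((j.factorial : ℝ))⁻¹ *
            (if j ≤ k then ((k.choose j : ℝ)) * (j.factorial : ℝ) *
              (s0^(k-j) * iteratedDeriv (k-j) (fun s => phi1 s ^ j) 0) else 0) := by
        rw [zero_add]
        exact congrArg (fun z => Real.exp (-(t*s0)) * z)
          (Finset.sum_congr rfl fun j _ => hterm j)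

theorem stmt_16 (m : ℕ) (hm : 1 ≤ m) (r : ℝ) (hr : 0 ≤ r) (t : ℝ) (ht : 0 < t) :
    ∑ k ∈ Finset.range (m + 1), (1 / (Nat.factorial k) : ℝ) *
        iteratedDeriv k
          (fun a : ℝ => Real.exp (-(2 * t * r ^ 2) / (1 + Real.sqrt (1 - 4 * a * r ^ 2)))) 0
    = ∑ j ∈ Finset.range (m + 1), ∑ k ∈ Finset.range (m - j + 1),
        (1 / ((Nat.factorial j : ℝ) * (Nat.factorial k)) : ℝ) *
          iteratedDeriv k (fun s : ℝ => (((1/2 + Real.sqrt (1/4 - s)) ^ 2)⁻¹) ^ j) 0 *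
          (-(t * r ^ 2)) ^ j * r ^ (2 * (j + k)) * Real.exp (-t * r ^ 2) := by
  rcases eq_or_lt_of_le hr with hr0 | hrpos
  · -- r = 0
    subst hr0
    have hconst : (fun a : ℝ => Real.exp (-(2 * t * (0:ℝ) ^ 2) /
        (1 + Real.sqrt (1 - 4 * a * (0:ℝ) ^ 2)))) = fun _ => (1:ℝ) := by
      funext a; norm_num
    rw [hconst]
    rw [Finset.sum_eq_single_of_mem 0 (by simp)]
    · rw [Finset.sum_eq_single_of_mem 0 (by simp)]
      · rw [Finset.sum_eq_single_of_mem 0 (by simp)]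
        · simp [iD_const']
        · intro k _ hk
          have : (0:ℝ) ^ (2 * (0 + k)) = 0 := by apply zero_pow; omega
          rw [this]; ring
      · intro j _ hj
        apply Finset.sum_eq_zero
        intro k _
        have : (-(t * (0:ℝ) ^ 2)) ^ j = 0 := by
          rw [show -(t * (0:ℝ)^2) = 0 by ring]; exact zero_pow hj
        rw [this]; ring
    · intro k _ hk
      rw [iD_const']; simp [hk]
  · -- r > 0
    set s0 := r ^ 2 with hs0def
    have hs0 : 0 < s0 := by positivity
    have hCfun : ∀ j : ℕ, (fun s : ℝ => (((1/2 + Real.sqrt (1/4 - s)) ^ 2)⁻¹) ^ j)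
        = (fun s => phi1 s ^ j) := fun j => rfl
    simp only [hCfun]
    have trunc : ∀ (k : ℕ) (F : ℕ → ℝ), k ≤ m →
        ∑ j ∈ Finset.range (m+1), (if j ≤ k then F j else 0)
          = ∑ j ∈ Finset.range (k+1), F j := by
      intro k F hk
      rw [← Finset.sum_filter]
      congr 1
      ext j
      simp only [Finset.mem_filter, Finset.mem_range]
      omega
    have hL : ∀ k, k ≤ m →
        (1/(k.factorial:ℝ)) * iteratedDeriv k
            (fun a : ℝ => Real.exp (-(2*t*s0)/(1+Real.sqrt (1-4*a*s0)))) 0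
          = ∑ j ∈ Finset.range (k+1), (Real.exp (-(t*s0)) * (1/(k.factorial:ℝ)) *
              ((-(t*s0)*s0)^j * ((k.choose j:ℝ)) *
                (s0^(k-j) * iteratedDeriv (k-j) (fun s => phi1 s ^ j) 0))) := by
      intro k hk
      rw [hkey_lemma t s0 hs0 m k hk, ← trunc k _ hk, Finset.mul_sum, Finset.mul_sum]
      refine Finset.sum_congr rfl fun j _ => ?_
      have hj : (j.factorial:ℝ) ≠ 0 := by positivity
      split_ifs with h
      · field_simp
      · ring
    calc ∑ k ∈ Finset.range (m + 1), (1 / (Nat.factorial k) : ℝ) *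
          iteratedDeriv k
            (fun a : ℝ => Real.exp (-(2 * t * s0) / (1 + Real.sqrt (1 - 4 * a * s0)))) 0
        = ∑ k ∈ Finset.range (m+1), ∑ j ∈ Finset.range (k+1),
            (Real.exp (-(t*s0)) * (1/(k.factorial:ℝ)) *
              ((-(t*s0)*s0)^j * ((k.choose j:ℝ)) *
                (s0^(k-j) * iteratedDeriv (k-j) (fun s => phi1 s ^ j) 0))) :=
          Finset.sum_congr rfl fun k hk =>
            hL k (Nat.lt_succ_iff.mp (Finset.mem_range.mp hk))
      _ = ∑ j ∈ Finset.range (m+1), ∑ k ∈ Finset.range (m-j+1),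
            (Real.exp (-(t*s0)) * (1/((j+k).factorial:ℝ)) *
              ((-(t*s0)*s0)^j * (((j+k).choose j:ℝ)) *
                (s0^((j+k)-j) * iteratedDeriv ((j+k)-j) (fun s => phi1 s ^ j) 0))) :=
          tri' m (fun j k => Real.exp (-(t*s0)) * (1/(k.factorial:ℝ)) *
              ((-(t*s0)*s0)^j * ((k.choose j:ℝ)) *
                (s0^(k-j) * iteratedDeriv (k-j) (fun s => phi1 s ^ j) 0)))
      _ = ∑ j ∈ Finset.range (m + 1), ∑ k ∈ Finset.range (m - j + 1),
          (1 / ((Nat.factorial j : ℝ) * (Nat.factorial k)) : ℝ) *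
            iteratedDeriv k (fun s : ℝ => phi1 s ^ j) 0 *
            (-(t * s0)) ^ j * r ^ (2 * (j + k)) * Real.exp (-t * s0) := by
          refine Finset.sum_congr rfl fun j _ => Finset.sum_congr rfl fun k _ => ?_
          simp only [Nat.add_sub_cancel_left]
          have hcc : ((j+k).choose j : ℝ) * (j.factorial:ℝ) * (k.factorial:ℝ)
              = ((j+k).factorial : ℝ) := by
            have h := Nat.choose_mul_factorial_mul_factorial (Nat.le_add_right j k)
            rw [Nat.add_sub_cancel_left] at h
            exact_mod_cast h
          have h1 : (j.factorial:ℝ) ≠ 0 := by positivity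
          have h2 : (k.factorial:ℝ) ≠ 0 := by positivity
          have h3 : (((j+k).factorial):ℝ) ≠ 0 := by positivity
          have hr2 : r ^ (2 * (j + k)) = s0 ^ (j + k) := by
            rw [pow_mul, ← hs0def]
          rw [hr2, show Real.exp (-t * s0) = Real.exp (-(t*s0)) by ring_nf]
          field_simp
          linear_combination ((-(t*s0))^j * s0^(j+k) *
            iteratedDeriv k (fun s => phi1 s ^ j) 0) * hcc
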